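/- For any T > 0 and x ≥ 1 with xT ≥ e, the integral ∫₀^T (1 - cos(xu))/u du is at most C·log(xT) for an absolute constant C. -/

import Mathlib

open MeasureTheory Real

/-- There is an absolute constant `C` such that for any `T > 0` and `x ≥ 1` with
`xT ≥ e`, `∫₀^T (1 - cos(xu))/u du ≤ C · log(xT)`. -/
theorem stmt2 :
    ∃ C > 0, ∀ T x : ℝ, 0 < T → 1 ≤ x → Real.exp 1 ≤ x * T →
      (∫ u in (0:ℝ)..T, (1 - Real.cos (x * u)) / u) ≤ C * Real.log (x * T) := by
  refine ⟨3, by norm_num, fun T x hT hx hxT => ?_⟩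
  have hx0 : (0:ℝ) < x := lt_of_lt_of_le one_pos hx
  set f : ℝ → ℝ := fun u => (1 - Real.cos (x * u)) / u with hf
  set a : ℝ := 1 / x with ha
  have ha0 : 0 < a := by positivity
  have hexp : (1:ℝ) < Real.exp 1 := by
    have := Real.exp_one_gt_d9; linarith
  have haT : a ≤ T := by
    rw [ha, div_le_iff₀ hx0]
    nlinarith [mul_comm x T]
  have hlog : 1 ≤ Real.log (x * T) := by
    have := Real.log_le_log (Real.exp_pos 1) hxT
    rwa [Real.log_exp] at this
  have hfmeas : Measurable f := by
    exact ((measurable_const.sub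
      (Real.measurable_cos.comp (measurable_const.mul measurable_id))).div measurable_id)
  -- integrability on [0, a]
  have hbound : ∀ u ∈ Set.Ioc (0:ℝ) a, ‖f u‖ ≤ x ^ 2 / 2 * a := by
    intro u hu
    obtain ⟨hu0, hua⟩ := hu
    have h1 : 1 - Real.cos (x * u) ≤ (x * u) ^ 2 / 2 := by
      have := Real.one_sub_sq_div_two_le_cos (x := x * u); linarith
    have h2 : 0 ≤ 1 - Real.cos (x * u) := by
      have := Real.cos_le_one (x * u); linarith
    have hfu : f u ≤ x ^ 2 / 2 * a := by
      rw [hf]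
      have : (1 - Real.cos (x * u)) / u ≤ (x * u) ^ 2 / 2 / u :=
        div_le_div_of_nonneg_right h1 hu0.le |>.trans_eq rfl
      calc (1 - Real.cos (x * u)) / u ≤ (x * u) ^ 2 / 2 / u := this
        _ = x ^ 2 / 2 * u := by field_simp
        _ ≤ x ^ 2 / 2 * a := by nlinarith
    have hfu0 : 0 ≤ f u := div_nonneg h2 hu0.le
    rwa [Real.norm_eq_abs, abs_of_nonneg hfu0]
  have hint1 : IntervalIntegrable f volume 0 a := by
    rw [intervalIntegrable_iff_integrableOn_Ioc_of_le ha0.le]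
    apply MeasureTheory.Integrable.mono' (g := fun _ => x ^ 2 / 2 * a)
      (integrableOn_const measure_Ioc_lt_top.ne)
      hfmeas.aestronglyMeasurable
    exact (ae_restrict_iff' measurableSet_Ioc).mpr (Filter.Eventually.of_forall hbound)
  -- integrability on [a, T]
  have hcontOn : ContinuousOn f (Set.uIcc a T) := by
    apply ContinuousOn.div
    · exact (continuous_const.sub (Real.continuous_cos.comp
        (continuous_const.mul continuous_id))).continuousOn
    · exact continuousOn_id
    · intro u hu
      have : a ≤ u := by
        rcases Set.mem_uIcc.mp hu with h | h
        · exact h.1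
        · linarith [h.1]
      linarith
  have hint2 : IntervalIntegrable f volume a T := hcontOn.intervalIntegrable
  -- bound first piece
  have hB1 : (∫ u in (0:ℝ)..a, f u) ≤ 1 / 4 := by
    have hg : IntervalIntegrable (fun u => x ^ 2 / 2 * u) volume 0 a :=
      (continuous_const.mul continuous_id).intervalIntegrable 0 a
    have hmono : (∫ u in (0:ℝ)..a, f u) ≤ ∫ u in (0:ℝ)..a, x ^ 2 / 2 * u := by
      apply intervalIntegral.integral_mono_on ha0.le hint1 hg
      intro u hu
      rcases eq_or_lt_of_le hu.1 with h | h
      · simp [hf, ← h]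
      · have h1 : 1 - Real.cos (x * u) ≤ (x * u) ^ 2 / 2 := by
          have := Real.one_sub_sq_div_two_le_cos (x := x * u); linarith
        have : f u ≤ (x * u) ^ 2 / 2 / u := div_le_div_of_nonneg_right h1 h.le
        calc f u ≤ (x * u) ^ 2 / 2 / u := this
          _ = x ^ 2 / 2 * u := by field_simp
    have hcalc : (∫ u in (0:ℝ)..a, x ^ 2 / 2 * u) = 1 / 4 := by
      rw [intervalIntegral.integral_const_mul, integral_id]
      rw [ha]; field_simp
      ring
    linarith
  -- bound second piece
  have hB2 : (∫ u in a..T, f u) ≤ 2 * Real.log (x * T) := by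
    have hg : IntervalIntegrable (fun u => 2 * u⁻¹) volume a T := by
      apply ContinuousOn.intervalIntegrable
      apply ContinuousOn.mul continuousOn_const
      apply ContinuousOn.inv₀ continuousOn_id
      intro u hu
      have : a ≤ u := by
        rcases Set.mem_uIcc.mp hu with h | h
        · exact h.1
        · linarith [h.1]
      intro h0; rw [id_eq] at h0; rw [h0] at this; linarith
    have hmono : (∫ u in a..T, f u) ≤ ∫ u in a..T, 2 * u⁻¹ := by
      apply intervalIntegral.integral_mono_on haT hint2 hg
      intro u hu
      have hu0 : 0 < u := lt_of_lt_of_le ha0 hu.1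
      have h1 : 1 - Real.cos (x * u) ≤ 2 := by
        have := Real.neg_one_le_cos (x * u); linarith
      calc f u ≤ 2 / u := div_le_div_of_nonneg_right h1 hu0.le
        _ = 2 * u⁻¹ := by rw [div_eq_mul_inv]
    have hcalc : (∫ u in a..T, 2 * u⁻¹) = 2 * Real.log (x * T) := by
      rw [intervalIntegral.integral_const_mul, integral_inv_of_pos ha0 hT, ha]
      congr 1
      rw [div_div_eq_mul_div, div_one, mul_comm]
    linarith
  have hsplit : (∫ u in (0:ℝ)..T, f u)
      = (∫ u in (0:ℝ)..a, f u) + ∫ u in a..T, f u :=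
    (intervalIntegral.integral_add_adjacent_intervals hint1 hint2).symm
  calc (∫ u in (0:ℝ)..T, f u) = (∫ u in (0:ℝ)..a, f u) + ∫ u in a..T, f u := hsplit
    _ ≤ 1 / 4 + 2 * Real.log (x * T) := by linarith
    _ ≤ 3 * Real.log (x * T) := by linarith
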